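/- Let n be a positive integer and 0 < ε < 1. Set β = ε/(8n), I = ⌈log 2 / log(1+β)⌉, and α_i = (1+β)^i for i = 0, 1, …, I (so α₀ = 1 and α_I ≥ 2). Let L ⊂ ℝⁿ be a full-rank lattice and K ∈ Conv_n, and assume η(α_i K, L) ≤ ε/2 for every i = 0, 1, …, I. Then η(αK, L) < ε for every real α ≥ 1. -/

import Mathlib

open MeasureTheory Set Pointwise Filter
open scoped ENNReal

noncomputable section

abbrev Euc (n : ℕ) := EuclideanSpace ℝ (Fin n)

/-- `N(L, K, x) = |L ∩ (K + x)|`. -/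
def Ncount {n : ℕ} (L K : Set (Euc n)) (x : Euc n) : ℕ :=
  (L ∩ (x +ᵥ K)).ncard

/-- Covering smoothness `η(K, L)`, where `dens` is the asymptotic density of `L`
(`dens = 1/covol(L)` for a full-rank lattice `L`). -/
def eta {n : ℕ} (K L : Set (Euc n)) (dens : ℝ) : ℝ≥0∞ :=
  ⨆ x : Euc n, ENNReal.ofReal |(Ncount L K x : ℝ) / ((volume K).toReal * dens) - 1|

/-- The full-rank lattice `g ℤⁿ` (for `g` an invertible matrix). -/
def latticeOf {n : ℕ} (g : Matrix (Fin n) (Fin n) ℝ) : Set (Euc n) :=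
  {x | ∃ m : Fin n → ℤ, ∀ i, x i = g.mulVec (fun j => (m j : ℝ)) i}

/-- Membership in `Conv_n`: bounded convex subset of `ℝⁿ` with nonempty interior. -/
def IsConvBody {n : ℕ} (K : Set (Euc n)) : Prop :=
  Convex ℝ K ∧ Bornology.IsBounded K ∧ (interior K).Nonempty

/-- The translates `ℓ + K`, `ℓ ∈ L`, are pairwise disjoint. -/
def IsPacking {n : ℕ} (L K : Set (Euc n)) : Prop :=
  L.Pairwise fun y z => Disjoint (y +ᵥ K) (z +ᵥ K)

/-- The translates of `K` by `L` cover `ℝⁿ`. -/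
def IsCovering {n : ℕ} (L K : Set (Euc n)) : Prop :=
  L + K = univ

/-- Covering radius of `L` with respect to `K`. -/
def rCov {n : ℕ} (K L : Set (Euc n)) : ℝ :=
  sInf {α : ℝ | 0 < α ∧ IsCovering L (α • K)}

/-- Packing radius of `L` with respect to `K`. -/
def rPack {n : ℕ} (K L : Set (Euc n)) : ℝ :=
  sSup {α : ℝ | 0 < α ∧ IsPacking L (α • K)}

/-- `ρ_K(L)`: ratio of covering and packing radii. -/
def rhoK {n : ℕ} (K L : Set (Euc n)) : ℝ := rCov K L / rPack K L

/-- The construction A lattice `(1/p)·π_p⁻¹(S)`. -/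
def constA {n : ℕ} (p : ℕ) (S : Submodule (ZMod p) (Fin n → ZMod p)) : Set (Euc n) :=
  {x | ∃ m : Fin n → ℤ, (fun i => (m i : ZMod p)) ∈ S ∧ ∀ i, x i = (m i : ℝ) / p}

/-- The lattice `L(S) = (1/p)·g·π_p⁻¹(S)`, for `L = g ℤⁿ`. -/
def latticeOfS {n : ℕ} (g : Matrix (Fin n) (Fin n) ℝ) (p : ℕ)
    (S : Submodule (ZMod p) (Fin n → ZMod p)) : Set (Euc n) :=
  {x | ∃ m : Fin n → ℤ, (fun i => (m i : ZMod p)) ∈ S ∧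
    ∀ i, x i = g.mulVec (fun j => (m j : ℝ)) i / p}

/-- `Φ_{K,L}(ε)` for a lattice of covolume `covol`. -/
def Phi {n : ℕ} (K L : Set (Euc n)) (covol ε : ℝ) : ℝ :=
  sSup {v : ℝ | ∃ α : ℝ, 0 < α ∧ v = (volume (α • K)).toReal / covol ∧
    ENNReal.ofReal ε < eta (α • K) L (1 / covol)}

/-- Discrete smoothness `η_{F_p}(A, S)`. -/
def etaFp {p n : ℕ} (A S : Set (Fin n → ZMod p)) : ℝ :=
  ⨆ x : Fin n → ZMod p,
    |(((x +ᵥ S) ∩ A).ncard : ℝ) / ((S.ncard : ℝ) * (A.ncard : ℝ) / (p : ℝ) ^ n) - 1|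

/-- Number of `r`-dimensional subspaces of `F_pⁿ`. -/
def GrCard (p n r : ℕ) : ℕ :=
  Nat.card {S : Submodule (ZMod p) (Fin n → ZMod p) // Module.finrank (ZMod p) S = r}

set_option maxHeartbeats 1000000

variable {n : ℕ}

def psi (g : Matrix (Fin n) (Fin n) ℝ) (m : Fin n → ℤ) : Euc n :=
  WithLp.toLp 2 (fun i => g.mulVec (fun j => (m j : ℝ)) i)

lemma mem_latticeOf_iff {g : Matrix (Fin n) (Fin n) ℝ} {x : Euc n} :
    x ∈ latticeOf g ↔ ∃ m : Fin n → ℤ, x = psi g m := by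
  constructor
  · rintro ⟨m, hm⟩; exact ⟨m, PiLp.ext hm⟩
  · rintro ⟨m, rfl⟩; exact ⟨m, fun i => rfl⟩

lemma psi_injective {g : Matrix (Fin n) (Fin n) ℝ} (hg : g.det ≠ 0) :
    Function.Injective (psi g) := by
  intro a b hab
  have hu : IsUnit g.det := isUnit_iff_ne_zero.mpr hg
  have h1 : ∀ v : Fin n → ℝ, g⁻¹.mulVec (g.mulVec v) = v := by
    intro v
    rw [Matrix.mulVec_mulVec, Matrix.nonsing_inv_mul g hu, Matrix.one_mulVec]
  have h2 : (fun j => (a j : ℝ)) = fun j => (b j : ℝ) := by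
    have := congrArg (fun x : Euc n => g⁻¹.mulVec (fun i => x i)) hab
    change g⁻¹.mulVec (g.mulVec fun j => (a j : ℝ)) = g⁻¹.mulVec (g.mulVec fun j => (b j : ℝ)) at this
    rwa [h1, h1] at this
  funext j
  exact_mod_cast congrFun h2 j

lemma psi_add_smul (g : Matrix (Fin n) (Fin n) ℝ) (c : ℤ) (m r : Fin n → ℤ) :
    psi g (fun i => c * m i + r i) = (c : ℝ) • psi g m + psi g r := by
  ext i
  have : (fun j => ((c * m j + r j : ℤ) : ℝ))
      = (c : ℝ) • (fun j => (m j : ℝ)) + (fun j => (r j : ℝ)) := by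
    funext j; push_cast; simp [Pi.smul_apply, Pi.add_apply]
  show g.mulVec _ i = _
  rw [this, Matrix.mulVec_add, Matrix.mulVec_smul]
  rfl

lemma coord_abs_le_norm (x : Euc n) (j : Fin n) : |x j| ≤ ‖x‖ := by
  rw [EuclideanSpace.norm_eq]
  have h1 : |x j| ^ 2 ≤ ∑ i, ‖x i‖ ^ 2 := by
    have := Finset.single_le_sum (f := fun i => ‖x i‖ ^ 2)
      (fun i _ => by positivity) (Finset.mem_univ j)
    simpa [Real.norm_eq_abs, sq_abs] using this
  calc |x j| = Real.sqrt (|x j| ^ 2) := by rw [Real.sqrt_sq (abs_nonneg _)]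
  _ ≤ _ := Real.sqrt_le_sqrt h1

lemma lattice_inter_finite {g : Matrix (Fin n) (Fin n) ℝ} (hg : g.det ≠ 0)
    {B : Set (Euc n)} (hB : Bornology.IsBounded B) : (latticeOf g ∩ B).Finite := by
  obtain ⟨R, hR⟩ := hB.subset_closedBall 0
  have hu : IsUnit g.det := isUnit_iff_ne_zero.mpr hg
  set h := g⁻¹ with hh
  set M : ℝ := ∑ i, ∑ j, |h i j| with hM
  set N : ℕ := ⌈M * |R|⌉₊ with hN
  have key : latticeOf g ∩ B ⊆ psi g '' (Set.univ.pi fun _ : Fin n => Set.Icc (-(N:ℤ)) (N:ℤ)) := by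
    rintro x ⟨hxL, hxB⟩
    obtain ⟨m, rfl⟩ := mem_latticeOf_iff.mp hxL
    refine ⟨m, fun i _ => ?_, rfl⟩
    have hnorm : ‖psi g m‖ ≤ |R| := by
      have := hR hxB
      simp only [Metric.mem_closedBall, dist_zero_right] at this
      exact this.trans (le_abs_self R)
    have hrec : (fun j => (m j : ℝ)) = h.mulVec (fun j => psi g m j) := by
      have : ∀ v : Fin n → ℝ, h.mulVec (g.mulVec v) = v := by
        intro v
        rw [Matrix.mulVec_mulVec, hh, Matrix.nonsing_inv_mul g hu, Matrix.one_mulVec]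
      rw [show (fun j => psi g m j) = g.mulVec (fun j => (m j : ℝ)) from rfl, this]
    have habs : |(m i : ℝ)| ≤ M * |R| := by
      have : (m i : ℝ) = ∑ j, h i j * psi g m j := by
        rw [show ((m i : ℝ)) = (fun j => (m j : ℝ)) i from rfl, hrec]
        rfl
      rw [this]
      calc |∑ j, h i j * psi g m j| ≤ ∑ j, |h i j * psi g m j| := Finset.abs_sum_le_sum_abs _ _
      _ ≤ ∑ j, |h i j| * |R| := by
          refine Finset.sum_le_sum fun j _ => ?_
          rw [abs_mul]
          exact mul_le_mul_of_nonneg_left ((coord_abs_le_norm _ j).trans hnorm) (abs_nonneg _)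
      _ = (∑ j, |h i j|) * |R| := by rw [Finset.sum_mul]
      _ ≤ M * |R| := by
          refine mul_le_mul_of_nonneg_right ?_ (abs_nonneg _)
          exact Finset.single_le_sum (f := fun i => ∑ j, |h i j|)
            (fun i _ => Finset.sum_nonneg fun j _ => abs_nonneg _) (Finset.mem_univ i)
    have : |(m i : ℝ)| ≤ (N : ℝ) := habs.trans (Nat.le_ceil _)
    have hmi : |m i| ≤ (N : ℤ) := by
      have h2 : ((|m i| : ℤ) : ℝ) ≤ ((N:ℤ) : ℝ) := by push_cast; exact this
      exact_mod_cast h2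
    exact Set.mem_Icc.mpr ⟨neg_le_of_abs_le hmi, le_of_abs_le hmi⟩
  exact (Set.Finite.image _ (Set.Finite.pi fun _ => Set.finite_Icc _ _)).subset key

lemma ncard_iUnion_of_disjoint {α ι : Type*} [Fintype ι] {t : ι → Set α}
    (hf : ∀ i, (t i).Finite) (hd : Pairwise (Function.onFun Disjoint t)) :
    (⋃ i, t i).ncard = ∑ i, (t i).ncard := by
  classical
  have hcoe : (⋃ i, t i) = ((Finset.univ.biUnion fun i => (hf i).toFinset : Finset α) : Set α) := by
    ext a
    simp [Set.Finite.mem_toFinset]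
  rw [hcoe, Set.ncard_coe_finset, Finset.card_biUnion]
  · exact Finset.sum_congr rfl fun i _ => (Set.ncard_eq_toFinset_card _ (hf i)).symm
  · intro i _ j _ hij
    exact Set.Finite.disjoint_toFinset.mpr (hd hij)

lemma sandwich_subset {K : Set (Euc n)} (hK : Convex ℝ K) {c : Euc n} (hc : c ∈ K)
    {a b : ℝ} (ha : 0 < a) (hab : a ≤ b) :
    ((b - a) • c) +ᵥ (a • K) ⊆ b • K := by
  rintro z hz
  obtain ⟨y, hy, rfl⟩ := Set.mem_vadd_set.mp hz
  obtain ⟨w, hw, rfl⟩ := Set.mem_smul_set.mp hy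
  have hb : 0 < b := lt_of_lt_of_le ha hab
  refine Set.mem_smul_set.mpr ⟨(a / b) • w + ((b - a) / b) • c, ?_, ?_⟩
  · exact hK hw hc (div_nonneg ha.le hb.le) (div_nonneg (by linarith) hb.le) (by field_simp; ring)
  · simp only [smul_add, smul_smul]
    rw [mul_div_cancel₀ _ hb.ne', mul_div_cancel₀ _ hb.ne']
    rw [vadd_eq_add, add_comm]

lemma ncount_mono {L A B : Set (Euc n)} {x y : Euc n}
    (h : y +ᵥ A ⊆ x +ᵥ B) (hfin : (L ∩ (x +ᵥ B)).Finite) :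
    Ncount L A y ≤ Ncount L B x :=
  Set.ncard_le_ncard (Set.inter_subset_inter_right _ h) hfin

lemma abs_le_of_eta_le {C L : Set (Euc n)} {d e : ℝ} (he : 0 ≤ e)
    (h : eta C L d ≤ ENNReal.ofReal e) (x : Euc n) :
    |(Ncount L C x : ℝ) / ((volume C).toReal * d) - 1| ≤ e := by
  have h2 := le_trans
    (le_iSup (fun x => ENNReal.ofReal |(Ncount L C x : ℝ) / ((volume C).toReal * d) - 1|) x) h
  rwa [ENNReal.ofReal_le_ofReal_iff he] at h2

lemma eta_le_of_forall {C L : Set (Euc n)} {d e : ℝ}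
    (h : ∀ x, |(Ncount L C x : ℝ) / ((volume C).toReal * d) - 1| ≤ e) :
    eta C L d ≤ ENNReal.ofReal e :=
  iSup_le fun x => ENNReal.ofReal_le_ofReal (h x)

lemma vol_smul (a : ℝ) (ha : 0 ≤ a) (K : Set (Euc n)) :
    (volume (a • K)).toReal = a ^ n * (volume K).toReal := by
  rw [Measure.addHaar_smul, ENNReal.toReal_mul, ENNReal.toReal_ofReal (abs_nonneg _),
    finrank_euclideanSpace_fin, abs_of_nonneg (pow_nonneg ha n)]

lemma ncount_two_pow {g : Matrix (Fin n) (Fin n) ℝ} (hg : g.det ≠ 0)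
    {C : Set (Euc n)} (hC : Bornology.IsBounded C) (k : ℕ) (x : Euc n) :
    Ncount (latticeOf g) (((2:ℝ) ^ k) • C) x
      = ∑ r : Fin n → Fin (2 ^ k), Ncount (latticeOf g) C
          (((2:ℝ) ^ k)⁻¹ • (x - psi g (fun i => ((r i : ℕ) : ℤ)))) := by
  classical
  set L := latticeOf g with hL
  set p : ℕ := 2 ^ k with hp
  have hp0 : 0 < p := pow_pos (by norm_num) k
  set P : ℝ := (2:ℝ) ^ k with hP
  have hP0 : 0 < P := by positivity
  have hPp : P = ((p:ℤ) : ℝ) := by push_cast [hp, hP]; norm_num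
  set rv : (Fin n → Fin p) → (Fin n → ℤ) := fun r i => ((r i : ℕ) : ℤ) with hrv
  set y : (Fin n → Fin p) → Euc n := fun r => P⁻¹ • (x - psi g (rv r)) with hy
  set φ : (Fin n → Fin p) → Euc n → Euc n := fun r v => P • v + psi g (rv r) with hφ
  set S : (Fin n → Fin p) → Set (Euc n) := fun r => L ∩ (y r +ᵥ C) with hS
  have hφpsi : ∀ r (m' : Fin n → ℤ), φ r (psi g m') = psi g (fun i => p * m' i + rv r i) := by
    intro r m'
    rw [psi_add_smul g (p : ℤ) m' (rv r)]
    simp only [hφ, hPp]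
  have hφinj : ∀ r, Function.Injective (φ r) := by
    intro r v w hvw
    simp only [hφ] at hvw
    have h2 : P • v = P • w := by
      have := add_right_cancel hvw
      exact this
    exact smul_right_injective (Euc n) hP0.ne' h2
  have hunion : L ∩ (x +ᵥ P • C) = ⋃ r, φ r '' S r := by
    apply Set.Subset.antisymm
    · rintro z ⟨hzL, hzC⟩
      obtain ⟨m, rfl⟩ := mem_latticeOf_iff.mp hzL
      have hpZ : ((p:ℤ)) ≠ 0 := by exact_mod_cast hp0.ne'
      have hmod : ∀ i, 0 ≤ m i % (p:ℤ) ∧ m i % (p:ℤ) < (p:ℤ) := fun i =>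
        ⟨Int.emod_nonneg _ hpZ, Int.emod_lt_of_pos _ (by exact_mod_cast hp0)⟩
      set r : Fin n → Fin p := fun i => ⟨(m i % (p:ℤ)).toNat, by
        have := hmod i; omega⟩ with hr
      have hrvr : ∀ i, rv r i = m i % (p:ℤ) := by
        intro i
        simp only [hrv, hr]
        exact Int.toNat_of_nonneg (hmod i).1
      set m' : Fin n → ℤ := fun i => m i / (p:ℤ) with hm'
      have hmdecomp : m = fun i => p * m' i + rv r i := by
        funext i
        rw [hrvr i, hm']
        exact (Int.mul_ediv_add_emod (m i) (p:ℤ)).symm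
      refine Set.mem_iUnion.mpr ⟨r, psi g m', ⟨mem_latticeOf_iff.mpr ⟨m', rfl⟩, ?_⟩, ?_⟩
      · -- psi g m' ∈ y r +ᵥ C
        obtain ⟨c0, hc0, hc0eq⟩ := Set.mem_vadd_set.mp hzC
        obtain ⟨c1, hc1, rfl⟩ := Set.mem_smul_set.mp hc0
        refine Set.mem_vadd_set.mpr ⟨c1, hc1, ?_⟩
        have hzeq : psi g m = P • psi g m' + psi g (rv r) := by
          conv_lhs => rw [hmdecomp, ← hφpsi r m']
        have : psi g m' = P⁻¹ • (psi g m - psi g (rv r)) := by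
          rw [hzeq]
          rw [add_sub_cancel_right, inv_smul_smul₀ hP0.ne']
        rw [this, ← hc0eq]
        simp only [hy, vadd_eq_add]
        rw [show x + P • c1 - psi g (rv r) = (x - psi g (rv r)) + P • c1 by abel]
        rw [smul_add, inv_smul_smul₀ hP0.ne']
      · rw [hφpsi r m', ← hmdecomp]
    · rintro z hz
      obtain ⟨r, v, ⟨hvL, hvC⟩, rfl⟩ := Set.mem_iUnion.mp hz
      obtain ⟨m', rfl⟩ := mem_latticeOf_iff.mp hvL
      constructor
      · exact mem_latticeOf_iff.mpr ⟨_, hφpsi r m'⟩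
      · obtain ⟨c1, hc1, hc1eq⟩ := Set.mem_vadd_set.mp hvC
        refine Set.mem_vadd_set.mpr ⟨P • c1, Set.smul_mem_smul_set hc1, ?_⟩
        simp only [hφ]
        rw [← hc1eq]
        simp only [hy, vadd_eq_add]
        rw [smul_add, smul_inv_smul₀ hP0.ne']
        abel
  have hdisj : Pairwise (Function.onFun Disjoint (fun r => φ r '' S r)) := by
    intro r s hrs
    rw [Function.onFun, Set.disjoint_left]
    rintro z ⟨v, ⟨hvL, _⟩, hveq⟩ ⟨w, ⟨hwL, _⟩, hweq⟩
    obtain ⟨a, rfl⟩ := mem_latticeOf_iff.mp hvL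
    obtain ⟨b, rfl⟩ := mem_latticeOf_iff.mp hwL
    rw [hφpsi] at hveq hweq
    have heq : (fun i => (p:ℤ) * a i + rv r i) = (fun i => (p:ℤ) * b i + rv s i) :=
      psi_injective hg (hveq.trans hweq.symm)
    apply hrs
    funext i
    have hi : (p:ℤ) * a i + rv r i = (p:ℤ) * b i + rv s i := congrFun heq i
    have hr0 : 0 ≤ rv r i := Int.natCast_nonneg _
    have hr1 : rv r i < (p:ℤ) := by
      simp only [hrv]; exact_mod_cast (r i).2
    have hs0 : 0 ≤ rv s i := Int.natCast_nonneg _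
    have hs1 : rv s i < (p:ℤ) := by
      simp only [hrv]; exact_mod_cast (s i).2
    have hdiff : rv r i - rv s i = (p:ℤ) * (b i - a i) := by linarith [hi]
    have hba : b i - a i = 0 := by
      by_contra hne
      have h1 : (1:ℤ) ≤ |b i - a i| := Int.one_le_abs (by omega)
      have h2 : (p:ℤ) ≤ |(p:ℤ) * (b i - a i)| := by
        rw [abs_mul, abs_of_nonneg (by positivity : (0:ℤ) ≤ (p:ℤ))]
        nlinarith
      rw [← hdiff] at h2
      have h3 : |rv r i - rv s i| < (p:ℤ) := by rw [abs_lt]; omega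
      linarith
    have : rv r i = rv s i := by
      rw [hba, mul_zero] at hdiff; omega
    have : ((r i : ℕ) : ℤ) = ((s i : ℕ) : ℤ) := this
    exact Fin.ext (by exact_mod_cast this)
  have hSfin : ∀ r, (S r).Finite := fun r => lattice_inter_finite hg (hC.vadd _)
  have himfin : ∀ r, ((fun r => φ r '' S r) r).Finite := fun r => (hSfin r).image _
  show (L ∩ (x +ᵥ P • C)).ncard = _
  rw [hunion, ncard_iUnion_of_disjoint himfin hdisj]
  exact Finset.sum_congr rfl fun r _ => Set.ncard_image_of_injective _ (hφinj r)

lemma bounds_of_abs_le {N W e : ℝ} (hW : 0 < W) (h : |N / W - 1| ≤ e) :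
    (1 - e) * W ≤ N ∧ N ≤ (1 + e) * W := by
  rw [abs_le] at h
  constructor
  · have h1 : 1 - e ≤ N / W := by linarith [h.1]
    calc (1 - e) * W ≤ (N / W) * W := by nlinarith
    _ = N := by field_simp
  · have h2 : N / W ≤ 1 + e := by linarith [h.2]
    calc N = (N / W) * W := by field_simp
    _ ≤ (1 + e) * W := by nlinarith

lemma abs_le_of_bounds {N W e : ℝ} (hW : 0 < W) (h1 : (1 - e) * W ≤ N) (h2 : N ≤ (1 + e) * W) :
    |N / W - 1| ≤ e := by
  rw [abs_le]
  constructor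
  · have : 1 - e ≤ N / W := by rw [le_div_iff₀ hW]; linarith
    linarith
  · have : N / W ≤ 1 + e := by rw [div_le_iff₀ hW]; linarith
    linarith

lemma ratio_bound {β ε : ℝ} (hn : 0 < n) (hβ0 : 0 < β) (hε0 : 0 < ε) (hε1 : ε < 1)
    (hnβ : (n : ℝ) * β ≤ ε / 8) : (1 + β) ^ n ≤ 1 + ε / 4 := by
  have hn1 : (1:ℝ) ≤ (n:ℝ) := by exact_mod_cast hn
  have hβ1 : β < 1 := by nlinarith
  have hbern : 1 - (n : ℝ) * β ≤ (1 - β) ^ n := by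
    have := one_add_mul_le_pow (a := -β) (by linarith) n
    calc 1 - (n:ℝ) * β = 1 + (n:ℝ) * (-β) := by ring
    _ ≤ (1 + -β) ^ n := this
    _ = (1 - β) ^ n := by ring_nf
  have hprod : (1 + β) ^ n * (1 - β) ^ n = (1 - β ^ 2) ^ n := by
    rw [← mul_pow]; ring_nf
  have hle1 : (1 - β ^ 2) ^ n ≤ 1 := pow_le_one₀ (by nlinarith) (by nlinarith)
  have h18 : (0:ℝ) < 1 - ε / 8 := by linarith
  have hkey : (1 + β) ^ n * (1 - ε / 8) ≤ 1 := by
    have hmono : (1 + β) ^ n * (1 - ε/8) ≤ (1 + β) ^ n * (1 - β) ^ n := by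
      have hpos : (0:ℝ) < (1 + β) ^ n := by positivity
      have : (1 : ℝ) - ε/8 ≤ (1 - β)^n := by linarith [hbern]
      nlinarith
    calc (1 + β) ^ n * (1 - ε/8) ≤ (1 + β) ^ n * (1 - β) ^ n := hmono
    _ = (1 - β ^ 2) ^ n := hprod
    _ ≤ 1 := hle1
  nlinarith [hkey, h18]

/-- smoothness along a multiplicative net in `[1,2)` implies
smoothness for all dilates `α ≥ 1`. -/
theorem statement15 (n : ℕ) (hn : 0 < n) (ε : ℝ) (hε0 : 0 < ε) (hε1 : ε < 1)
    (g : Matrix (Fin n) (Fin n) ℝ) (hg : g.det ≠ 0)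
    (K : Set (Euc n)) (hK : IsConvBody K)
    (hnet : ∀ i : ℕ, i ≤ ⌈Real.log 2 / Real.log (1 + ε / (8 * n))⌉₊ →
      eta ((1 + ε / (8 * n)) ^ i • K) (latticeOf g) (1 / |g.det|) ≤ ENNReal.ofReal (ε / 2)) :
    ∀ α : ℝ, 1 ≤ α →
      eta (α • K) (latticeOf g) (1 / |g.det|) < ENNReal.ofReal ε := by
  classical
  obtain ⟨hKconv, hKbdd, hKint⟩ := hK
  set β : ℝ := ε / (8 * n) with hβdef
  set I : ℕ := ⌈Real.log 2 / Real.log (1 + β)⌉₊ with hIdef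
  set L : Set (Euc n) := latticeOf g with hLdef
  set d : ℝ := 1 / |g.det| with hddef
  have hn1 : (1:ℝ) ≤ (n:ℝ) := by exact_mod_cast hn
  have hd0 : 0 < d := by rw [hddef]; exact one_div_pos.mpr (abs_pos.mpr hg)
  have hβ0 : 0 < β := by rw [hβdef]; positivity
  have hnβ : (n:ℝ) * β = ε / 8 := by
    rw [hβdef]; field_simp
  have hβ18 : β ≤ 1 / 8 := by nlinarith
  have hratio : (1 + β) ^ n ≤ 1 + ε / 4 := ratio_bound hn hβ0 hε0 hε1 (le_of_eq hnβ)
  have hvolK_pos : 0 < (volume K).toReal :=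
    ENNReal.toReal_pos (Measure.measure_pos_of_nonempty_interior _ hKint).ne'
      hKbdd.measure_lt_top.ne
  set V : ℝ := (volume K).toReal * d with hVdef
  have hV0 : 0 < V := mul_pos hvolK_pos hd0
  obtain ⟨c, hcint⟩ := hKint
  have hcK : c ∈ K := interior_subset hcint
  have hI2 : (2:ℝ) ≤ (1 + β) ^ I := by
    have hlogβ : 0 < Real.log (1 + β) := Real.log_pos (by linarith)
    have hlog : Real.log 2 / Real.log (1 + β) ≤ (I:ℝ) := Nat.le_ceil _
    have h1 : Real.log 2 ≤ (I:ℝ) * Real.log (1 + β) := by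
      rw [div_le_iff₀ hlogβ] at hlog; linarith
    have h2 : Real.log 2 ≤ Real.log ((1 + β) ^ I) := by
      rw [Real.log_pow]; exact h1
    exact (Real.log_le_log_iff (by norm_num) (by positivity)).mp h2
  -- pointwise two-sided bounds at net scales
  have hnetpt : ∀ i : ℕ, i ≤ I → ∀ w : Euc n,
      (1 - ε/2) * (((1+β)^i)^n * V) ≤ (Ncount L ((1+β)^i • K) w : ℝ) ∧
      (Ncount L ((1+β)^i • K) w : ℝ) ≤ (1 + ε/2) * (((1+β)^i)^n * V) := by
    intro i hi w
    have h := abs_le_of_eta_le (by linarith) (hnet i hi) w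
    have hden : (volume ((1+β)^i • K)).toReal * d = ((1+β)^i)^n * V := by
      rw [vol_smul _ (by positivity), hVdef, mul_assoc]
    rw [hden] at h
    have hW : (0:ℝ) < ((1+β)^i)^n * V := by positivity
    have := bounds_of_abs_le hW h
    exact ⟨by linarith [this.1], by linarith [this.2]⟩
  -- net-scale pointwise bound for all b ∈ [1,2)
  have hPnet : ∀ b : ℝ, 1 ≤ b → b < 2 → ∀ z : Euc n,
      |(Ncount L (b • K) z : ℝ) / (b^n * V) - 1| ≤ 7*ε/8 := by
    intro b hb1 hb2 z
    set Pn : ℕ → Prop := fun j => (1+β)^j ≤ b with hPn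
    have hP0 : Pn 0 := by simp only [hPn, pow_zero]; linarith
    set i : ℕ := Nat.findGreatest Pn I with hidef
    have hPi : Pn i := Nat.findGreatest_spec (Nat.zero_le I) hP0
    have hiI : i < I := by
      rcases lt_or_eq_of_le (Nat.findGreatest_le I (P := Pn)) with h | h
      · exact h
      · exfalso
        have hPI : Pn I := h ▸ hPi
        simp only [hPn] at hPI
        linarith
    have hbub : b < (1+β)^(i+1) := by
      have hng := Nat.findGreatest_is_greatest (Nat.lt_succ_self i) hiI
      simp only [hPn, not_le] at hng
      exact hng
    set a : ℝ := (1+β)^i with hadef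
    set a' : ℝ := (1+β)^(i+1) with ha'def
    have ha0 : 0 < a := by positivity
    have ha1 : 1 ≤ a := one_le_pow₀ (by linarith)
    have hab : a ≤ b := hPi
    have hba' : b ≤ a' := le_of_lt hbub
    have hb0 : 0 < b := by linarith
    have ha'a : a' = a * (1+β) := pow_succ (1+β) i
    set W : ℝ := b^n * V with hWdef
    have hW0 : 0 < W := by positivity
    -- lower bound
    have hlow : (1 - 7*ε/8) * W ≤ (Ncount L (b • K) z : ℝ) := by
      have hsub := sandwich_subset hKconv hcK ha0 hab
      have hincl : (z + (b - a) • c) +ᵥ (a • K) ⊆ z +ᵥ (b • K) := by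
        rw [← vadd_vadd z ((b-a) • c) (a • K)]
        exact Set.vadd_set_mono hsub
      have hmono : Ncount L (a • K) (z + (b-a) • c) ≤ Ncount L (b • K) z :=
        ncount_mono hincl (lattice_inter_finite hg ((hKbdd.smul₀ b).vadd z))
      have hlowa := (hnetpt i hiI.le (z + (b-a) • c)).1
      have hban : b^n ≤ a^n * (1+ε/4) := by
        have h1 : b ≤ a * (1+β) := by rw [← ha'a]; exact hba'
        calc b^n ≤ (a*(1+β))^n := pow_le_pow_left₀ hb0.le h1 n
        _ = a^n * (1+β)^n := mul_pow a (1+β) n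
        _ ≤ a^n * (1+ε/4) := by nlinarith [pow_pos ha0 n, hratio]
      have hcast : (Ncount L (a • K) (z + (b-a) • c) : ℝ) ≤ (Ncount L (b • K) z : ℝ) := by
        exact_mod_cast hmono
      have han0 : (0:ℝ) < a^n := pow_pos ha0 n
      have e1 : (1 - 7*ε/8) * b^n ≤ (1 - ε/2) * a^n := by
        nlinarith [hban, han0, mul_pos han0 hε0]
      have e2 : (1 - 7*ε/8) * b^n * V ≤ (1 - ε/2) * a^n * V :=
        mul_le_mul_of_nonneg_right e1 hV0.le
      calc (1 - 7*ε/8) * W = (1 - 7*ε/8) * b^n * V := by rw [hWdef]; ring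
      _ ≤ (1 - ε/2) * a^n * V := e2
      _ = (1 - ε/2) * (a^n * V) := by ring
      _ ≤ (Ncount L (a • K) (z + (b-a) • c) : ℝ) := hlowa
      _ ≤ _ := hcast
    -- upper bound
    have hupp : (Ncount L (b • K) z : ℝ) ≤ (1 + 7*ε/8) * W := by
      have hsub := sandwich_subset hKconv hcK hb0 hba'
      have hincl : z +ᵥ (b • K) ⊆ (z - (a' - b) • c) +ᵥ (a' • K) := by
        have h2 := Set.vadd_set_mono (a := z - (a' - b) • c) hsub
        rw [vadd_vadd (z - (a' - b) • c) ((a' - b) • c) (b • K)] at h2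
        rw [sub_add_cancel] at h2
        exact h2
      have hmono : Ncount L (b • K) z ≤ Ncount L (a' • K) (z - (a'-b) • c) :=
        ncount_mono hincl (lattice_inter_finite hg ((hKbdd.smul₀ a').vadd _))
      have huppa := (hnetpt (i+1) hiI (z - (a'-b) • c)).2
      have ha'n : a'^n ≤ b^n * (1+ε/4) := by
        have h1 : a' ≤ b * (1+β) := by rw [ha'a]; nlinarith
        have ha'0 : 0 < a' := by positivity
        calc a'^n ≤ (b*(1+β))^n := pow_le_pow_left₀ ha'0.le h1 n
        _ = b^n * (1+β)^n := mul_pow b (1+β) n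
        _ ≤ b^n * (1+ε/4) := by nlinarith [pow_pos hb0 n, hratio]
      have hcast : (Ncount L (b • K) z : ℝ) ≤ (Ncount L (a' • K) (z - (a'-b) • c) : ℝ) := by
        exact_mod_cast hmono
      have hbn0 : (0:ℝ) < b^n := pow_pos hb0 n
      calc (Ncount L (b • K) z : ℝ) ≤ (Ncount L (a' • K) (z - (a'-b) • c) : ℝ) := hcast
      _ ≤ (1 + ε/2) * (a'^n * V) := huppa
      _ ≤ (1 + 7*ε/8) * W := by
          have e1 : (1 + ε/2) * a'^n ≤ (1 + 7*ε/8) * b^n := by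
            nlinarith [ha'n, hbn0, mul_pos hbn0 hε0]
          have e2 : (1 + ε/2) * a'^n * V ≤ (1 + 7*ε/8) * b^n * V :=
            mul_le_mul_of_nonneg_right e1 hV0.le
          rw [hWdef]
          calc (1 + ε/2) * (a'^n * V) = (1 + ε/2) * a'^n * V := by ring
          _ ≤ (1 + 7*ε/8) * b^n * V := e2
          _ = (1 + 7*ε/8) * (b^n * V) := by ring
    exact abs_le_of_bounds hW0 hlow hupp
  -- general α
  intro α hα
  have hα0 : 0 < α := by linarith
  set j : ℕ := (Int.log 2 α).toNat with hjdef
  have hjlog : (0:ℤ) ≤ Int.log 2 α := by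
    rw [Int.log_of_one_le_right _ hα]
    exact Int.natCast_nonneg _
  have h2j : ((2:ℝ))^j = (2:ℝ)^(Int.log 2 α) := by
    rw [hjdef, ← zpow_natCast, Int.toNat_of_nonneg hjlog]
  have hj1 : (2:ℝ)^j ≤ α := by
    rw [h2j]; exact_mod_cast Int.zpow_log_le_self (by norm_num) hα0
  have hj2 : α < (2:ℝ)^j * 2 := by
    have h := Int.lt_zpow_succ_log_self (R := ℝ) (b := 2) (by norm_num) α
    have h' : α < (2:ℝ) ^ (Int.log 2 α + 1) := by exact_mod_cast h
    rw [zpow_add_one₀ (by norm_num : (2:ℝ) ≠ 0), ← h2j] at h'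
    exact h'
  set b : ℝ := α / 2^j with hbdef
  have h2j0 : (0:ℝ) < 2^j := by positivity
  have hb1 : 1 ≤ b := by rw [hbdef, le_div_iff₀ h2j0]; linarith
  have hb2 : b < 2 := by rw [hbdef, div_lt_iff₀ h2j0]; linarith
  have hb0 : 0 < b := by linarith
  have hsmul : α • K = ((2:ℝ)^j) • (b • K) := by
    rw [smul_smul]
    congr 1
    rw [hbdef]; field_simp
  have hfinal : ∀ x : Euc n,
      |(Ncount L (α • K) x : ℝ) / ((volume (α • K)).toReal * d) - 1| ≤ 7*ε/8 := by
    intro x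
    have hden : (volume (α • K)).toReal * d = α^n * V := by
      rw [vol_smul _ hα0.le, hVdef, mul_assoc]
    rw [hden, hsmul]
    have hsum := ncount_two_pow hg (hKbdd.smul₀ b) j x
    rw [hsum]
    set yy : (Fin n → Fin (2^j)) → Euc n :=
      fun r => ((2:ℝ)^j)⁻¹ • (x - psi g (fun i => ((r i : ℕ) : ℤ))) with hyy
    have hterm : ∀ r : Fin n → Fin (2^j),
        (1 - 7*ε/8) * (b^n * V) ≤ (Ncount L (b • K) (yy r) : ℝ) ∧
        (Ncount L (b • K) (yy r) : ℝ) ≤ (1 + 7*ε/8) * (b^n * V) :=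
      fun r => bounds_of_abs_le (by positivity) (hPnet b hb1 hb2 (yy r))
    have hcard : (Fintype.card (Fin n → Fin (2^j)) : ℝ) = ((2:ℝ)^j)^n := by
      rw [Fintype.card_fun, Fintype.card_fin, Fintype.card_fin]
      push_cast
      ring
    have hcastsum : ((∑ r : Fin n → Fin (2^j), Ncount L (b • K) (yy r) : ℕ) : ℝ)
        = ∑ r : Fin n → Fin (2^j), (Ncount L (b • K) (yy r) : ℝ) := by
      push_cast; rfl
    have hαn : α^n = ((2:ℝ)^j)^n * b^n := by
      rw [show α = (2:ℝ)^j * b by rw [hbdef]; field_simp, mul_pow]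
    have hsumlow : (1 - 7*ε/8) * (α^n * V) ≤ ∑ r : Fin n → Fin (2^j), (Ncount L (b • K) (yy r) : ℝ) := by
      have h1 : ∑ r : Fin n → Fin (2^j), (1 - 7*ε/8) * (b^n * V)
          ≤ ∑ r : Fin n → Fin (2^j), (Ncount L (b • K) (yy r) : ℝ) :=
        Finset.sum_le_sum fun r _ => (hterm r).1
      rw [Finset.sum_const, nsmul_eq_mul] at h1
      calc (1 - 7*ε/8) * (α^n * V)
          = (Fintype.card (Fin n → Fin (2^j)) : ℝ) * ((1 - 7*ε/8) * (b^n * V)) := by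
            rw [hcard, hαn]; ring
      _ ≤ _ := by
            rw [show ((Finset.univ : Finset (Fin n → Fin (2^j))).card : ℝ)
              = (Fintype.card (Fin n → Fin (2^j)) : ℝ) by rw [Finset.card_univ]] at h1
            exact h1
    have hsumupp : ∑ r : Fin n → Fin (2^j), (Ncount L (b • K) (yy r) : ℝ) ≤ (1 + 7*ε/8) * (α^n * V) := by
      have h1 : ∑ r : Fin n → Fin (2^j), (Ncount L (b • K) (yy r) : ℝ)
          ≤ ∑ r : Fin n → Fin (2^j), (1 + 7*ε/8) * (b^n * V) :=
        Finset.sum_le_sum fun r _ => (hterm r).2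
      rw [Finset.sum_const, nsmul_eq_mul] at h1
      calc ∑ r : Fin n → Fin (2^j), (Ncount L (b • K) (yy r) : ℝ) ≤ _ := h1
      _ = (1 + 7*ε/8) * (α^n * V) := by
            rw [show ((Finset.univ : Finset (Fin n → Fin (2^j))).card : ℝ)
              = (Fintype.card (Fin n → Fin (2^j)) : ℝ) by rw [Finset.card_univ], hcard, hαn]
            ring
    rw [hcastsum]
    exact abs_le_of_bounds (by positivity) hsumlow hsumupp
  calc eta (α • K) L d ≤ ENNReal.ofReal (7*ε/8) := eta_le_of_forall hfinal
  _ < ENNReal.ofReal ε := by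
      rw [ENNReal.ofReal_lt_ofReal_iff hε0]; linarith

end
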